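/- Let z_1,...,z_d be distinct complex numbers, all nonzero, with z_1^n = ... = z_d^n, where n = c + d and c ≥ 1. Then the complete homogeneous symmetric polynomials H_{c+1}(z_1,...,z_d), H_{c+2}(z_1,...,z_d), ..., H_{n-1}(z_1,...,z_d) all vanish. -/

import Mathlib

noncomputable section

/-- Complete homogeneous symmetric polynomial of degree `m` in `d` variables. -/
def Hpoly (d m : ℕ) (z : Fin d → ℂ) : ℂ :=
  ∑ α ∈ Finset.Nat.antidiagonalTuple d m, ∏ i, z i ^ α i

open Finset Polynomial

namespace Stmt3Aux

/-- Geometric series. -/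
lemma geom_mul (a : ℂ) :
    (1 - PowerSeries.C a * PowerSeries.X) * PowerSeries.mk (fun k => a ^ k) = 1 := by
  ext k
  rw [sub_mul, one_mul, map_sub]
  cases k with
  | zero => simp
  | succ k =>
      rw [mul_assoc, PowerSeries.coeff_C_mul, PowerSeries.coeff_succ_X_mul,
        PowerSeries.coeff_mk, PowerSeries.coeff_mk, pow_succ]
      simp [PowerSeries.coeff_one, mul_comm]

/-- Lagrange-type vanishing: `∑ z_i^k / ∏_{j≠i}(z_i - z_j) = 0` for `k ≤ d - 2`. -/
lemma lagrange_zero {d : ℕ} (z : Fin d → ℂ) (hinj : Function.Injective z)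
    (k : ℕ) (hk : k + 1 < d) :
    ∑ i, z i ^ k * (∏ j ∈ univ.erase i, (z i - z j))⁻¹ = 0 := by
  have hprod_ne : ∀ i : Fin d, (∏ j ∈ univ.erase i, (z i - z j)) ≠ 0 := by
    intro i
    rw [Finset.prod_ne_zero_iff]
    intro j hj
    exact sub_ne_zero.mpr fun h => (Finset.mem_erase.mp hj).1 ((hinj h).symm)
  set p : ℂ[X] := ∑ i, Polynomial.C (z i ^ k * (∏ j ∈ univ.erase i, (z i - z j))⁻¹) *
      ∏ j ∈ univ.erase i, (X - Polynomial.C (z j)) with hp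
  have hdegq : ∀ i : Fin d, (∏ j ∈ univ.erase i, (X - Polynomial.C (z j))).natDegree = d - 1 := by
    intro i
    rw [Polynomial.natDegree_prod _ _ (fun j _ => X_sub_C_ne_zero (z j))]
    simp [Finset.card_erase_of_mem]
  have hmonicq : ∀ i : Fin d, (∏ j ∈ univ.erase i, (X - Polynomial.C (z j))).Monic :=
    fun i => monic_prod_of_monic _ _ fun j _ => monic_X_sub_C (z j)
  have hdegp : p.natDegree ≤ d - 1 := by
    refine Polynomial.natDegree_sum_le_of_forall_le _ _ fun i _ => ?_
    refine le_trans (Polynomial.natDegree_C_mul_le _ _) (le_of_eq (hdegq i))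
  have heval : ∀ t : Fin d, p.eval (z t) = z t ^ k := by
    intro t
    rw [hp, Polynomial.eval_finset_sum]
    rw [Finset.sum_eq_single t]
    · rw [Polynomial.eval_mul, Polynomial.eval_C, Polynomial.eval_prod]
      simp only [Polynomial.eval_sub, Polynomial.eval_X, Polynomial.eval_C]
      rw [mul_assoc, inv_mul_cancel₀ (hprod_ne t), mul_one]
    · intro i _ hit
      simp only [Polynomial.eval_mul, Polynomial.eval_prod, Polynomial.eval_sub,
        Polynomial.eval_X, Polynomial.eval_C]
      have ht : t ∈ univ.erase i := Finset.mem_erase.mpr ⟨fun h => hit h.symm, mem_univ t⟩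
      exact mul_eq_zero_of_right _ (Finset.prod_eq_zero ht (sub_self (z t)))
    · intro h; exact absurd (mem_univ t) h
  -- p = X ^ k
  have hpXk : p = X ^ k := by
    have hz : p - X ^ k = 0 := by
      apply Polynomial.eq_zero_of_natDegree_lt_card_of_eval_eq_zero _ hinj
      · intro i
        rw [Polynomial.eval_sub, heval i, Polynomial.eval_pow, Polynomial.eval_X, sub_self]
      · calc (p - X ^ k).natDegree ≤ max p.natDegree (X ^ k : ℂ[X]).natDegree :=
              Polynomial.natDegree_sub_le _ _
          _ ≤ d - 1 := by
              refine max_le hdegp ?_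
              rw [Polynomial.natDegree_X_pow]
              omega
          _ < Fintype.card (Fin d) := by simp; omega
    exact sub_eq_zero.mp hz
  have := congrArg (fun q : ℂ[X] => q.coeff (d - 1)) hpXk
  simp only [hp, Polynomial.finset_sum_coeff, Polynomial.coeff_C_mul] at this
  rw [Polynomial.coeff_X_pow] at this
  have hcoeff : ∀ i : Fin d,
      (∏ j ∈ univ.erase i, (X - Polynomial.C (z j))).coeff (d - 1) = 1 := by
    intro i
    have := (hmonicq i).coeff_natDegree
    rwa [hdegq i] at this
  simp only [hcoeff, mul_one] at this
  rw [this, if_neg (by omega)]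

/-- Partial fraction polynomial identity. -/
lemma pf_poly {d : ℕ} (hd : 1 ≤ d) (z : Fin d → ℂ) (hinj : Function.Injective z)
    (hne : ∀ i, z i ≠ 0) :
    ∑ i, Polynomial.C (z i ^ (d - 1) * (∏ j ∈ univ.erase i, (z i - z j))⁻¹) *
      ∏ j ∈ univ.erase i, (1 - Polynomial.C (z j) * X) = 1 := by
  have hprod_ne : ∀ i : Fin d, (∏ j ∈ univ.erase i, (z i - z j)) ≠ 0 := by
    intro i
    rw [Finset.prod_ne_zero_iff]
    intro j hj
    exact sub_ne_zero.mpr fun h => (Finset.mem_erase.mp hj).1 ((hinj h).symm)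
  set p : ℂ[X] := ∑ i, Polynomial.C (z i ^ (d - 1) * (∏ j ∈ univ.erase i, (z i - z j))⁻¹) *
      ∏ j ∈ univ.erase i, (1 - Polynomial.C (z j) * X) with hp
  have hdegf : ∀ j : Fin d, (1 - Polynomial.C (z j) * X : ℂ[X]).natDegree ≤ 1 := by
    intro j
    refine le_trans (Polynomial.natDegree_sub_le _ _) (max_le (by simp) ?_)
    exact le_trans (Polynomial.natDegree_C_mul_le _ _) (le_of_eq Polynomial.natDegree_X)
  have hdegp : p.natDegree ≤ d - 1 := by
    refine Polynomial.natDegree_sum_le_of_forall_le _ _ fun i _ => ?_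
    refine le_trans (Polynomial.natDegree_C_mul_le _ _) ?_
    refine le_trans (Polynomial.natDegree_prod_le _ _) ?_
    calc ∑ j ∈ univ.erase i, (1 - Polynomial.C (z j) * X : ℂ[X]).natDegree
        ≤ ∑ j ∈ univ.erase i, 1 := Finset.sum_le_sum fun j _ => hdegf j
      _ = d - 1 := by simp [Finset.card_erase_of_mem]
  have heval : ∀ t : Fin d, p.eval (z t)⁻¹ = 1 := by
    intro t
    rw [hp, Polynomial.eval_finset_sum, Finset.sum_eq_single t]
    · simp only [Polynomial.eval_mul, Polynomial.eval_C, Polynomial.eval_prod,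
        Polynomial.eval_sub, Polynomial.eval_one, Polynomial.eval_X]
      have hfac : ∀ j : Fin d, (1 : ℂ) - z j * (z t)⁻¹ = (z t - z j) * (z t)⁻¹ := by
        intro j
        rw [sub_mul, mul_inv_cancel₀ (hne t)]
      rw [Finset.prod_congr rfl fun j _ => hfac j, Finset.prod_mul_distrib,
        Finset.prod_const, Finset.card_erase_of_mem (mem_univ t), Finset.card_univ,
        Fintype.card_fin]
      field_simp
      rw [one_div, inv_pow, mul_right_comm, mul_inv_cancel₀ (pow_ne_zero _ (hne t)),
        one_mul, div_self (hprod_ne t)]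
    · intro i _ hit
      simp only [Polynomial.eval_mul, Polynomial.eval_prod, Polynomial.eval_sub,
        Polynomial.eval_one, Polynomial.eval_X, Polynomial.eval_C]
      have ht : t ∈ univ.erase i := Finset.mem_erase.mpr ⟨fun h => hit h.symm, mem_univ t⟩
      refine mul_eq_zero_of_right _ (Finset.prod_eq_zero ht ?_)
      rw [mul_inv_cancel₀ (hne t), sub_self]
    · intro h; exact absurd (mem_univ t) h
  have hz : p - 1 = 0 := by
    apply Polynomial.eq_zero_of_natDegree_lt_card_of_eval_eq_zero _
      (show Function.Injective (fun i => (z i)⁻¹) from fun i j h => hinj (inv_injective h))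
    · intro i
      rw [Polynomial.eval_sub, heval i, Polynomial.eval_one, sub_self]
    · calc (p - 1).natDegree ≤ max p.natDegree (1 : ℂ[X]).natDegree :=
          Polynomial.natDegree_sub_le _ _
        _ ≤ d - 1 := by simpa using hdegp
        _ < Fintype.card (Fin d) := by simp; omega
  exact sub_eq_zero.mp hz

/-- The closed formula for `Hpoly`. -/
lemma hpoly_eq {d : ℕ} (hd : 1 ≤ d) (z : Fin d → ℂ) (hinj : Function.Injective z)
    (hne : ∀ i, z i ≠ 0) (m : ℕ) :
    Hpoly d m z = ∑ i, z i ^ (d - 1) * (∏ j ∈ univ.erase i, (z i - z j))⁻¹ * z i ^ m := by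
  classical
  set A : Fin d → ℂ := fun i => z i ^ (d - 1) * (∏ j ∈ univ.erase i, (z i - z j))⁻¹ with hA
  set M : PowerSeries ℂ := ∏ i, PowerSeries.mk (fun k => z i ^ k) with hM
  set S : PowerSeries ℂ := ∑ i, PowerSeries.C (A i) * PowerSeries.mk (fun k => z i ^ k)
    with hS
  set Pp : PowerSeries ℂ := ∏ i, (1 - PowerSeries.C (z i) * PowerSeries.X) with hPp
  have hPM : Pp * M = 1 := by
    rw [hPp, hM, ← Finset.prod_mul_distrib]
    rw [Finset.prod_congr rfl fun i _ => geom_mul (z i), Finset.prod_const_one]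
  have hPS : Pp * S = 1 := by
    rw [hS, Finset.mul_sum]
    have hterm : ∀ i : Fin d, Pp * (PowerSeries.C (A i) * PowerSeries.mk (fun k => z i ^ k))
        = PowerSeries.C (A i) * ∏ j ∈ univ.erase i,
            (1 - PowerSeries.C (z j) * PowerSeries.X) := by
      intro i
      rw [hPp, ← Finset.mul_prod_erase univ _ (mem_univ i)]
      rw [show ∀ a b cc dd : PowerSeries ℂ, a * b * (cc * dd) = cc * b * (a * dd) from
        fun a b cc dd => by ring]
      rw [geom_mul, mul_one]
    rw [Finset.sum_congr rfl fun i _ => hterm i]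
    -- now map the polynomial identity
    have hpoly := pf_poly hd z hinj hne
    have := congrArg (Polynomial.coeToPowerSeries.ringHom (R := ℂ)) hpoly
    simpa only [map_sum, map_mul, map_prod, map_sub, map_one, map_pow,
      Polynomial.coeToPowerSeries.ringHom_apply, Polynomial.coe_C, Polynomial.coe_X,
      hA] using this
  have hPp0 : Pp ≠ 0 := left_ne_zero_of_mul_eq_one hPM
  have hMS : M = S := mul_left_cancel₀ hPp0 (hPM.trans hPS.symm)
  have h1 : Hpoly d m z = PowerSeries.coeff m M := by
    rw [hM, PowerSeries.coeff_prod]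
    unfold Hpoly
    rw [Finset.sum_nbij' (i := fun α => (Finsupp.equivFunOnFinite.symm α))
      (j := fun l => ⇑l)]
    · intro α hα
      rw [Finset.mem_finsuppAntidiag]
      constructor
      · rw [← Finset.Nat.mem_antidiagonalTuple.mp hα]
        exact Finset.sum_congr rfl fun i _ => by
          rw [Finsupp.coe_equivFunOnFinite_symm]
      · exact Finset.subset_univ _
    · intro l hl
      rw [Finset.Nat.mem_antidiagonalTuple]
      rw [Finset.mem_finsuppAntidiag] at hl
      exact hl.1
    · intro α hα
      exact funext fun i => congrFun (Finsupp.coe_equivFunOnFinite_symm α) i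
    · intro l hl; simp
    · intro α hα
      refine Finset.prod_congr rfl fun i _ => ?_
      rw [PowerSeries.coeff_mk, Finsupp.coe_equivFunOnFinite_symm]
  rw [h1, hMS, hS, map_sum]
  refine Finset.sum_congr rfl fun i _ => ?_
  rw [PowerSeries.coeff_C_mul, PowerSeries.coeff_mk]

end Stmt3Aux

/-- If `z_1,…,z_d` are pairwise distinct nonzero complex numbers with equal
`n`-th powers, `n = c + d`, `c, d ≥ 1`, then `H_{c+1}(z) = ⋯ = H_{n-1}(z) = 0`. -/
theorem stmt3 (c d n : ℕ) (hc : 1 ≤ c) (hd : 1 ≤ d) (hn : n = c + d)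
    (z : Fin d → ℂ) (hinj : Function.Injective z) (hne : ∀ i, z i ≠ 0)
    (hpow : ∀ i j, z i ^ n = z j ^ n) :
    ∀ m, c + 1 ≤ m → m ≤ n - 1 → Hpoly d m z = 0 := by
  intro m hm1 hm2
  rw [Stmt3Aux.hpoly_eq hd z hinj hne m]
  have hexp : ∀ i : Fin d, z i ^ (d - 1) * (∏ j ∈ univ.erase i, (z i - z j))⁻¹ * z i ^ m
      = z ⟨0, hd⟩ ^ n * (z i ^ (m - c - 1) * (∏ j ∈ univ.erase i, (z i - z j))⁻¹) := by
    intro i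
    have h1 : (d - 1) + m = n + (m - c - 1) := by omega
    rw [mul_right_comm, ← pow_add, h1, pow_add, hpow i ⟨0, hd⟩, mul_assoc]
  rw [Finset.sum_congr rfl fun i _ => hexp i, ← Finset.mul_sum,
    Stmt3Aux.lagrange_zero z hinj (m - c - 1) (by omega), mul_zero]
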